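/- The two-sided ideal of the Ariki–Koike algebra H(d,n) generated by the element τ is equal to the two-sided ideal of H(d,n) generated by the element (T_1 − q)·∏_{1 ≤ i < j ≤ d}(X_1 + X_2 − (u_i + u_j)). -/

import Mathlib

open FreeAlgebra

/-- The defining relations of the Ariki–Koike algebra `H(d,n)` with parameters `q` and
`u = (u_1, …, u_d)`, viewed as relations on the free algebra on generators
`T_0, T_1, …, T_{n-1}` (indexed by `Fin n`). -/
inductive AKRel (k : Type*) [Field k] (q : k) (d n : ℕ) (u : Fin d → k) :
    FreeAlgebra k (Fin n) → FreeAlgebra k (Fin n) → Prop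
  | quad (i : Fin n) (hi : 1 ≤ (i : ℕ)) :
      AKRel k q d n u
        ((ι k i - algebraMap k (FreeAlgebra k (Fin n)) q) *
          (ι k i + algebraMap k (FreeAlgebra k (Fin n)) q⁻¹)) 0
  | cyclo (h : 0 < n) :
      AKRel k q d n u
        (((List.finRange d).map
            (fun i => ι k (⟨0, h⟩ : Fin n) - algebraMap k (FreeAlgebra k (Fin n)) (u i))).prod)
        0
  | comm (i j : Fin n) (hij : (i : ℕ) + 1 < (j : ℕ)) :
      AKRel k q d n u (ι k i * ι k j) (ι k j * ι k i)
  | braid (i j : Fin n) (hi : 1 ≤ (i : ℕ)) (hj : (j : ℕ) = (i : ℕ) + 1) :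
      AKRel k q d n u (ι k i * ι k j * ι k i) (ι k j * ι k i * ι k j)
  | bbraid (i j : Fin n) (hi : (i : ℕ) = 0) (hj : (j : ℕ) = 1) :
      AKRel k q d n u (ι k i * ι k j * ι k i * ι k j) (ι k j * ι k i * ι k j * ι k i)

/-- The Ariki–Koike algebra `H(d,n)`: the quotient of the free algebra on
`T_0, …, T_{n-1}` by the two-sided ideal (ring congruence) generated by the defining
relations. -/
abbrev ArikiKoike (k : Type*) [Field k] (q : k) (d n : ℕ) (u : Fin d → k) : Type _ :=
  RingQuot (AKRel k q d n u)

/-- The generator `T_i` of the Ariki–Koike algebra (junk value `0` for `i ≥ n`). -/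
noncomputable def AKT {k : Type*} [Field k] (q : k) (d n : ℕ) (u : Fin d → k) (i : ℕ) :
    ArikiKoike k q d n u :=
  if h : i < n then RingQuot.mkAlgHom k (AKRel k q d n u) (ι k (⟨i, h⟩ : Fin n)) else 0

/-- The Jucys–Murphy elements: `X_1 = T_0` and `X_{i+1} = T_i X_i T_i`.
(`AKX q d n u i` is the element `X_i`; the value at `i = 0` is junk.) -/
noncomputable def AKX {k : Type*} [Field k] (q : k) (d n : ℕ) (u : Fin d → k) :
    ℕ → ArikiKoike k q d n u
  | 0 => 1
  | 1 => AKT q d n u 0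
  | (i + 2) => AKT q d n u (i + 1) * AKX q d n u (i + 1) * AKT q d n u (i + 1)

/-- The element `τ = ∏_{1 ≤ i < j ≤ d} [(T_1 − q)(T_0 − q(u_i + u_j)/(q + q⁻¹))(T_1 − q)]`,
with factors taken in lexicographic order of the pairs `(i, j)`. -/
noncomputable def AKtau {k : Type*} [Field k] (q : k) (d n : ℕ) (u : Fin d → k) :
    ArikiKoike k q d n u :=
  ((List.finRange d).map (fun (i : Fin d) =>
    (((List.finRange d).map (fun (j : Fin d) =>
      if (i : ℕ) < (j : ℕ) then
        (AKT q d n u 1 - algebraMap k (ArikiKoike k q d n u) q) *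
          (AKT q d n u 0 -
            algebraMap k (ArikiKoike k q d n u) (q * (u i + u j) / (q + q⁻¹))) *
          (AKT q d n u 1 - algebraMap k (ArikiKoike k q d n u) q)
      else 1)).prod))).prod

/-- The element `∏_{1 ≤ i < j ≤ d} (X_1 + X_2 − (u_i + u_j))`, with factors taken in
lexicographic order of the pairs `(i, j)`. -/
noncomputable def AKprodJM {k : Type*} [Field k] (q : k) (d n : ℕ) (u : Fin d → k) :
    ArikiKoike k q d n u :=
  ((List.finRange d).map (fun (i : Fin d) =>
    (((List.finRange d).map (fun (j : Fin d) =>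
      if (i : ℕ) < (j : ℕ) then
        AKX q d n u 1 + AKX q d n u 2 - algebraMap k (ArikiKoike k q d n u) (u i + u j)
      else 1)).prod))).prod


section AKaux
variable {k A : Type*} [Field k] [Ring A] [Algebra k A]

private lemma ak_TT (q w : k) (t : A) (hE : (t - q • 1) * (t + w • 1) = 0) :
    (t - q • (1 : A)) * (t - q • 1) = (-(q + w)) • (t - q • 1) := by
  have key : (t - q • (1 : A)) * (t - q • 1) - (-(q + w)) • (t - q • 1)
      = (t - q • 1) * (t + w • 1) := by
    noncomm_ring
    match_scalars <;> (simp only [zsmul_eq_mul, Int.cast_neg, Int.cast_one, neg_mul, one_mul]; try ring)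
  rw [hE] at key
  exact sub_eq_zero.mp key

private lemma ak_comm (q w c : k) (t a : A) (hw : q * w = 1)
    (hE : (t - q • 1) * (t + w • 1) = 0) :
    (t - q • (1 : A)) * (a + t * a * t - c • 1) = (a + t * a * t - c • 1) * (t - q • 1) := by
  have key : (t - q • (1 : A)) * (a + t * a * t - c • 1)
        - (a + t * a * t - c • 1) * (t - q • 1)
      = ((t - q • 1) * (t + w • 1)) * (a * t) - (t * a) * ((t - q • 1) * (t + w • 1))
        + (1 - q * w) • (t * a - a * t) := by
    noncomm_ring
    match_scalars <;> (simp only [zsmul_eq_mul, Int.cast_neg, Int.cast_one, neg_mul, one_mul]; try ring)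
  rw [hE, hw] at key
  simp only [zero_mul, mul_zero, sub_self, zero_smul, sub_zero, zero_add, add_zero] at key
  exact sub_eq_zero.mp key

private lemma ak_factor (q w c r : k) (t a : A) (hw : q * w = 1) (hr : (q + w) * r = q * c)
    (hE : (t - q • 1) * (t + w • 1) = 0) :
    (t - q • (1 : A)) * (a - r • 1) * (t - q • 1)
      = (-q) • ((t - q • 1) * (a + t * a * t - c • 1)) := by
  have key : (t - q • (1 : A)) * (a - r • 1) * (t - q • 1)
        - (-q) • ((t - q • 1) * (a + t * a * t - c • 1))
      = (q • ((t - q • 1) * (t + w • 1))) * (a * t) - r • ((t - q • 1) * (t + w • 1))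
        + (1 - q * w) • (t * (a * t)) - (q * (1 - q * w)) • (a * t)
        + ((q + w) * r - q * c) • (t - q • 1) := by
    noncomm_ring
    match_scalars <;> (simp only [zsmul_eq_mul, Int.cast_neg, Int.cast_one, neg_mul, one_mul]; try ring)
  rw [hE, hw, hr] at key
  simp only [smul_zero, zero_mul, mul_zero, sub_self, zero_smul, sub_zero, zero_add, add_zero] at key
  exact sub_eq_zero.mp key

private lemma ak_list (q w : k) (t a : A) (hw : q * w = 1) (hq : q ≠ 0) (hqw : q + w ≠ 0)
    (hE : (t - q • 1) * (t + w • 1) = 0) (r : k → k) (hr : ∀ c, (q + w) * r c = q * c)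
    (L : List (Option k)) (hL : ∃ o ∈ L, o.isSome) :
    ∃ s : k, s ≠ 0 ∧
      (L.map (fun o => o.elim 1
          (fun c => (t - q • 1) * (a - r c • 1) * (t - q • 1)))).prod
        = s • ((t - q • 1) *
            (L.map (fun o => o.elim 1 (fun c => a + t * a * t - c • 1))).prod) := by
  set T := t - q • (1 : A) with hT
  set Z : k → A := fun c => a + t * a * t - c • 1 with hZ
  induction L with
  | nil => simp at hL
  | cons o L ih =>
    rcases o with _ | c
    · simp only [List.mem_cons, Option.isSome_none] at hL
      obtain ⟨o, ho, hso⟩ := hL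
      rcases ho with rfl | ho
      · simp at hso
      obtain ⟨s, hs0, hs⟩ := ih ⟨o, ho, hso⟩
      exact ⟨s, hs0, by simpa using hs⟩
    · by_cases hL' : ∃ o ∈ L, o.isSome
      · obtain ⟨s, hs0, hs⟩ := ih hL'
        refine ⟨s * (q * (q + w)), by
          exact mul_ne_zero hs0 (mul_ne_zero hq hqw), ?_⟩
        have h1 : T * (a - r c • 1) * T = (-q) • (T * Z c) :=
          ak_factor q w c (r c) t a hw (hr c) hE
        have h2 : T * Z c = Z c * T := ak_comm q w c t a hw hE
        have h3 : T * T = (-(q + w)) • T := ak_TT q w t hE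
        simp only [List.map_cons, List.prod_cons, Option.elim_some]
        rw [hs, h1]
        set Q := (L.map (fun o => o.elim 1 Z)).prod with hQ
        calc (-q) • (T * Z c) * (s • (T * Q))
            = ((-q) * s) • ((T * Z c) * (T * Q)) := by
              rw [smul_mul_assoc, mul_smul_comm, smul_smul]
          _ = ((-q) * s) • (Z c * (T * (T * Q))) := by rw [h2, mul_assoc]
          _ = ((-q) * s) • (Z c * ((T * T) * Q)) := by rw [mul_assoc]
          _ = ((-q) * s) • (Z c * (((-(q + w)) • T) * Q)) := by rw [h3]
          _ = ((-q) * (s * -(q + w))) • ((Z c * T) * Q) := by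
              rw [smul_mul_assoc, mul_smul_comm, smul_smul, ← mul_assoc (Z c) T Q]; congr 1; ring
          _ = ((-q) * (s * -(q + w))) • ((T * Z c) * Q) := by rw [h2]
          _ = (s * (q * (q + w))) • (T * (Z c * Q)) := by
              rw [mul_assoc (T) (Z c) Q]; congr 1; ring
      · push_neg at hL'
        have hone : ∀ (f : k → A), (L.map (fun o => o.elim 1 f)).prod = 1 := by
          intro f
          apply List.prod_eq_one
          intro x hx
          obtain ⟨o, ho, rfl⟩ := List.mem_map.mp hx
          have : o = none := Option.not_isSome_iff_eq_none.mp (by simpa using hL' o ho)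
          simp [this]
        refine ⟨-q, neg_ne_zero.mpr hq, ?_⟩
        simp only [List.map_cons, List.prod_cons, Option.elim_some, hone, mul_one]
        rw [ak_factor q w c (r c) t a hw (hr c) hE]

end AKaux

section SpanAux
variable {k A : Type*} [Field k] [Ring A] [Algebra k A]

private lemma span_singleton_le {v : A} {J : TwoSidedIdeal A} (hv : v ∈ J) :
    TwoSidedIdeal.span {v} ≤ J := by
  intro x hx
  rw [TwoSidedIdeal.mem_span_iff] at hx
  exact hx J (by intro z hz; rw [Set.mem_singleton_iff] at hz; subst hz; exact hv)

private lemma span_smul_eq (s : k) (hs : s ≠ 0) (y : A) :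
    TwoSidedIdeal.span ({s • y} : Set A) = TwoSidedIdeal.span {y} := by
  apply le_antisymm
  · apply span_singleton_le
    rw [Algebra.smul_def]
    exact TwoSidedIdeal.mul_mem_left _ _ _ (TwoSidedIdeal.subset_span rfl)
  · apply span_singleton_le
    have hmem : s • y ∈ TwoSidedIdeal.span ({s • y} : Set A) :=
      TwoSidedIdeal.subset_span rfl
    have h2 := TwoSidedIdeal.mul_mem_left _ (algebraMap k A s⁻¹) _ hmem
    rwa [← Algebra.smul_def, inv_smul_smul₀ hs] at h2

end SpanAux

private lemma nested_prod {M α β : Type*} [Monoid M] (L1 : List α) (L2 : List β)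
    (f : α → β → M) :
    (L1.map (fun i => (L2.map (f i)).prod)).prod
      = ((L1.flatMap (fun i => L2.map (fun j => (i, j)))).map (fun p => f p.1 p.2)).prod := by
  rw [List.map_flatMap, List.flatMap]
  rw [List.prod_flatten, List.map_map]
  congr 1
  apply List.map_congr_left
  intro i _
  simp [List.map_map, Function.comp_def]

/-- The two-sided ideal of the Ariki–Koike algebra `H(d,n)` generated by `τ` is equal to the
two-sided ideal generated by `(T_1 − q)·∏_{1 ≤ i < j ≤ d}(X_1 + X_2 − (u_i + u_j))`. -/
theorem arikiKoike_span_tau_eq {k : Type*} [Field k] (q : k) (hq : q ≠ 0)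
    (hq' : q + q⁻¹ ≠ 0) (d n : ℕ) (hd : 2 ≤ d) (hn : 2 ≤ n) (u : Fin d → k) :
    TwoSidedIdeal.span ({AKtau q d n u} : Set (ArikiKoike k q d n u)) =
      TwoSidedIdeal.span
        ({(AKT q d n u 1 - algebraMap k (ArikiKoike k q d n u) q) * AKprodJM q d n u} :
          Set (ArikiKoike k q d n u)) := by
  classical
  have h1n : (1 : ℕ) < n := by omega
  set t := AKT q d n u 1 with htdef
  set a := AKT q d n u 0 with hadef
  -- the quadratic relation for T₁ in the quotient
  have hrel := RingQuot.mkAlgHom_rel k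
    (AKRel.quad (k := k) (q := q) (d := d) (n := n) (u := u) ⟨1, h1n⟩ (by simp))
  have hE : (t - q • (1 : ArikiKoike k q d n u)) * (t + q⁻¹ • 1) = 0 := by
    have ht : t = RingQuot.mkAlgHom k (AKRel k q d n u) (ι k (⟨1, h1n⟩ : Fin n)) := by
      rw [htdef, AKT, dif_pos h1n]
    rw [ht]
    simpa [map_mul, map_sub, map_add, AlgHom.commutes, Algebra.algebraMap_eq_smul_one]
      using hrel
  have hw : q * q⁻¹ = 1 := mul_inv_cancel₀ hq
  have hX1 : AKX q d n u 1 = a := rfl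
  have hX2 : AKX q d n u 2 = t * a * t := rfl
  -- the scalars appearing in τ
  set r : k → k := fun c => q * c / (q + q⁻¹) with hrdef
  have hr : ∀ c, (q + q⁻¹) * r c = q * c := fun c =>
    mul_div_cancel₀ (q * c) hq'
  -- the list of pairs and its option version
  set Lp : List (Fin d × Fin d) :=
    (List.finRange d).flatMap (fun i => (List.finRange d).map (fun j => (i, j))) with hLp
  set ψ : Fin d × Fin d → Option k :=
    fun p => if (p.1 : ℕ) < (p.2 : ℕ) then some (u p.1 + u p.2) else none with hψ
  set Lopt : List (Option k) := Lp.map ψ with hLopt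
  -- τ as a product over Lopt
  have htau : AKtau q d n u = (Lopt.map (fun o => o.elim 1
      (fun c => (t - q • 1) * (a - r c • 1) * (t - q • 1)))).prod := by
    rw [hLopt, List.map_map, AKtau,
      nested_prod (List.finRange d) (List.finRange d)]
    congr 1
    apply List.map_congr_left
    intro p _
    simp only [Function.comp_apply, hψ]
    by_cases h : (p.1 : ℕ) < (p.2 : ℕ)
    · simp only [if_pos h, Option.elim_some, htdef, hadef, hrdef,
        Algebra.algebraMap_eq_smul_one]
    · simp only [if_neg h, Option.elim_none]
  -- the JM product as a product over Lopt
  have hjm : AKprodJM q d n u = (Lopt.map (fun o => o.elim 1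
      (fun c => a + t * a * t - c • 1))).prod := by
    rw [hLopt, List.map_map, AKprodJM,
      nested_prod (List.finRange d) (List.finRange d)]
    congr 1
    apply List.map_congr_left
    intro p _
    simp only [Function.comp_apply, hψ]
    by_cases h : (p.1 : ℕ) < (p.2 : ℕ)
    · simp only [if_pos h, Option.elim_some, hX1, hX2,
        Algebra.algebraMap_eq_smul_one]
    · simp only [if_neg h, Option.elim_none]
  -- there is a genuine factor
  have hsome : ∃ o ∈ Lopt, o.isSome := by
    refine ⟨ψ ((⟨0, by omega⟩ : Fin d), (⟨1, by omega⟩ : Fin d)), ?_, ?_⟩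
    · rw [hLopt]
      apply List.mem_map_of_mem
      rw [hLp, List.mem_flatMap]
      exact ⟨⟨0, by omega⟩, List.mem_finRange _,
        List.mem_map_of_mem (List.mem_finRange _)⟩
    · simp [hψ]
  obtain ⟨s, hs0, hs⟩ := ak_list q q⁻¹ t a hw hq hq' hE r hr Lopt hsome
  rw [htau, hjm, hs, Algebra.algebraMap_eq_smul_one]
  exact span_smul_eq s hs0 _
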